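/- arXiv:2502.05876 — 2 statements merged into one kernel-verified Lean document; each statement's English description precedes it below -/
import Mathlib

section
/- Let β₁ be the unique positive root of √(1-e^{-β})·arctanh(√(1-e^{-β})) = 1, and let η(β) = √2·arctanh(√(1-e^{-β})), w(x) = log(1-tanh²(x/√2)). Then the function β ↦ η(β)·w'(η(β)) + 2 is strictly decreasing in β > 0, positive for 0 < β < β₁, zero at β = β₁, and negative for β > β₁. -/
noncomputable def w (x : ℝ) : ℝ := Real.log (1 - Real.tanh (x / Real.sqrt 2) ^ 2)

noncomputable def artanh (x : ℝ) : ℝ := (1 / 2) * Real.log ((1 + x) / (1 - x))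

noncomputable def eta (β : ℝ) : ℝ := Real.sqrt 2 * artanh (Real.sqrt (1 - Real.exp (-β)))

lemma sqrt_two_mul_self : Real.sqrt 2 * Real.sqrt 2 = 2 :=
  Real.mul_self_sqrt (by norm_num)

lemma one_sub_tanh_sq (x : ℝ) : 1 - Real.tanh x ^ 2 = (Real.cosh x ^ 2)⁻¹ := by
  have hc := Real.cosh_pos x
  rw [Real.tanh_eq_sinh_div_cosh, div_pow]
  have h := Real.cosh_sq_sub_sinh_sq x
  field_simp
  exact h

lemma w_eq (x : ℝ) : w x = -2 * Real.log (Real.cosh (x / Real.sqrt 2)) := by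
  have hc := Real.cosh_pos (x / Real.sqrt 2)
  rw [w, one_sub_tanh_sq, Real.log_inv, Real.log_pow]
  push_cast
  ring

lemma deriv_w (x : ℝ) : deriv w x = -Real.sqrt 2 * Real.tanh (x / Real.sqrt 2) := by
  have h2 : (0:ℝ) < Real.sqrt 2 := Real.sqrt_pos.2 (by norm_num)
  set c := x / Real.sqrt 2 with hc
  have hcosh := Real.cosh_pos c
  have h1 : HasDerivAt (fun y : ℝ => y / Real.sqrt 2) (1 / Real.sqrt 2) x := by
    simpa using (hasDerivAt_id x).div_const (Real.sqrt 2)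
  have h3 : HasDerivAt (fun y : ℝ => Real.cosh (y / Real.sqrt 2))
      (Real.sinh c * (1 / Real.sqrt 2)) x := by
    rw [hc]; exact (Real.hasDerivAt_cosh (x / Real.sqrt 2)).comp x h1
  have h4 : HasDerivAt (fun y : ℝ => Real.log (Real.cosh (y / Real.sqrt 2)))
      (Real.sinh c * (1 / Real.sqrt 2) / Real.cosh c) x := h3.log hcosh.ne'
  have h5 : HasDerivAt (fun y : ℝ => -2 * Real.log (Real.cosh (y / Real.sqrt 2)))
      (-2 * (Real.sinh c * (1 / Real.sqrt 2) / Real.cosh c)) x := h4.const_mul (-2)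
  have hw : w = fun y : ℝ => -2 * Real.log (Real.cosh (y / Real.sqrt 2)) :=
    funext w_eq
  rw [hw, h5.deriv, Real.tanh_eq_sinh_div_cosh]
  field_simp
  linear_combination Real.sinh c * sqrt_two_mul_self

lemma tanh_artanh {s : ℝ} (h0 : -1 < s) (h1 : s < 1) :
    Real.tanh (artanh s) = s := by
  have hp : (0:ℝ) < 1 + s := by linarith
  have hm : (0:ℝ) < 1 - s := by linarith
  set y := artanh s with hy
  have hE : 0 < Real.exp y := Real.exp_pos y
  have hE2 : Real.exp y ^ 2 = (1 + s) / (1 - s) := by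
    have : Real.exp y ^ 2 = Real.exp (2 * y) := by
      rw [sq, ← Real.exp_add]; ring_nf
    rw [this, hy, artanh]
    have : 2 * ((1:ℝ) / 2 * Real.log ((1 + s) / (1 - s))) = Real.log ((1 + s) / (1 - s)) := by
      ring
    rw [this, Real.exp_log (div_pos hp hm)]
  rw [Real.tanh_eq_sinh_div_cosh, Real.sinh_eq, Real.cosh_eq, Real.exp_neg]
  have hden : 0 < Real.exp y + (Real.exp y)⁻¹ := by positivity
  have h' : Real.exp y ^ 2 * (1 - s) = 1 + s := by
    field_simp at hE2
    linarith [hE2]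
  have hne : Real.exp y ≠ 0 := hE.ne'
  rw [div_div_div_eq]
  rw [div_eq_iff (by positivity : (2:ℝ) * (Real.exp y + (Real.exp y)⁻¹) ≠ 0)]
  field_simp
  linear_combination h'

lemma artanh_pos {s : ℝ} (h0 : 0 < s) (h1 : s < 1) : 0 < artanh s := by
  have : (1:ℝ) < (1 + s) / (1 - s) := by
    rw [lt_div_iff₀ (by linarith)]; linarith
  have := Real.log_pos this
  rw [artanh]; linarith

lemma artanh_lt {a b : ℝ} (h0 : 0 < a) (hab : a < b) (h1 : b < 1) :
    artanh a < artanh b := by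
  have ha1 : a < 1 := hab.trans h1
  have h2 : (1 + a) / (1 - a) < (1 + b) / (1 - b) := by
    rw [div_lt_div_iff₀ (by linarith) (by linarith)]
    nlinarith
  have hpos : (0:ℝ) < (1 + a) / (1 - a) :=
    div_pos (by linarith) (by linarith)
  have := Real.log_lt_log hpos h2
  rw [artanh, artanh]; linarith

lemma s_mem {β : ℝ} (hβ : 0 < β) :
    0 < Real.sqrt (1 - Real.exp (-β)) ∧ Real.sqrt (1 - Real.exp (-β)) < 1 := by
  have h1 : Real.exp (-β) < 1 := Real.exp_lt_one_iff.2 (by linarith)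
  have h2 : 0 < Real.exp (-β) := Real.exp_pos _
  constructor
  · exact Real.sqrt_pos.2 (by linarith)
  · have := Real.sqrt_lt_sqrt (by linarith : (0:ℝ) ≤ 1 - Real.exp (-β))
      (by linarith : 1 - Real.exp (-β) < 1)
    simpa using this

lemma key (β : ℝ) (hβ : 0 < β) :
    eta β * deriv w (eta β) + 2 =
      2 - 2 * (Real.sqrt (1 - Real.exp (-β)) * artanh (Real.sqrt (1 - Real.exp (-β)))) := by
  obtain ⟨hs0, hs1⟩ := s_mem hβ
  have h2 : (0:ℝ) < Real.sqrt 2 := Real.sqrt_pos.2 (by norm_num)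
  have hdiv : eta β / Real.sqrt 2 = artanh (Real.sqrt (1 - Real.exp (-β))) := by
    rw [eta]; field_simp
  rw [deriv_w, hdiv, tanh_artanh (by linarith) hs1, eta]
  linear_combination (-(Real.sqrt (1 - Real.exp (-β)) *
    artanh (Real.sqrt (1 - Real.exp (-β))))) * sqrt_two_mul_self

lemma g_lt {a b : ℝ} (ha : 0 < a) (hab : a < b) (hb : b < 1) :
    a * artanh a < b * artanh b := by
  have h1 := artanh_pos ha (hab.trans hb)
  have h2 := artanh_lt ha hab hb
  nlinarith

theorem stmt_11 (β₁ : ℝ) (hβ₁ : 0 < β₁)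
    (hroot : Real.sqrt (1 - Real.exp (-β₁)) * artanh (Real.sqrt (1 - Real.exp (-β₁))) = 1) :
    StrictAntiOn (fun β : ℝ => eta β * deriv w (eta β) + 2) (Set.Ioi 0) ∧
    (∀ β : ℝ, 0 < β → β < β₁ → 0 < eta β * deriv w (eta β) + 2) ∧
    eta β₁ * deriv w (eta β₁) + 2 = 0 ∧
    (∀ β : ℝ, β₁ < β → eta β * deriv w (eta β) + 2 < 0) := by
  have hanti : StrictAntiOn (fun β : ℝ => eta β * deriv w (eta β) + 2) (Set.Ioi 0) := by
    intro a ha b hb hab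
    simp only [Set.mem_Ioi] at ha hb
    obtain ⟨ha0, ha1⟩ := s_mem ha
    obtain ⟨hb0, hb1⟩ := s_mem hb
    have hslt : Real.sqrt (1 - Real.exp (-a)) < Real.sqrt (1 - Real.exp (-b)) := by
      apply Real.sqrt_lt_sqrt
      · have := (Real.exp_pos (-a)); linarith [Real.exp_lt_one_iff.2 (show -a < 0 by linarith)]
      · have : Real.exp (-b) < Real.exp (-a) := Real.exp_lt_exp.2 (by linarith)
        linarith
    have := g_lt ha0 hslt hb1
    simp only [key a ha, key b hb]
    linarith
  have hzero : eta β₁ * deriv w (eta β₁) + 2 = 0 := by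
    rw [key β₁ hβ₁, hroot]; ring
  refine ⟨hanti, ?_, hzero, ?_⟩
  · intro β h0 hlt
    have := hanti (Set.mem_Ioi.2 h0) (Set.mem_Ioi.2 hβ₁) hlt
    simp only [hzero] at this
    linarith [this]
  · intro β hlt
    have := hanti (Set.mem_Ioi.2 hβ₁) (Set.mem_Ioi.2 (hβ₁.trans hlt)) hlt
    simp only [hzero] at this
    linarith [this]
end

section
/- Let 0 < α < 1, β > 0, and let U(x;β) and Λ(β) be the even solution and parameter defined via w and η. Then the function ψ(x;β) = (x-α)·U'(x;β) + 2 satisfies the linearized equation ψ'' + Λ(β) h(x,α) e^{U(x;β)} ψ = 0 on (-1,1)\{-α,α}. -/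
open Set

noncomputable def Lam (α β : ℝ) : ℝ := (1 - α) ^ (-2 : ℤ) * Real.exp (-β) * (eta β) ^ 2

noncomputable def step (α x : ℝ) : ℝ := if |x| < α then 0 else 1

noncomputable def U (α β x : ℝ) : ℝ :=
  if |x| < α then β else w (eta β * (|x| - α) / (1 - α)) + β

noncomputable def psi (α β x : ℝ) : ℝ := (x - α) * deriv (U α β) x + 2

noncomputable def T (x : ℝ) : ℝ := Real.tanh (x / Real.sqrt 2)

lemma tanh_sq_lt_one (x : ℝ) : Real.tanh x ^ 2 < 1 := by
  rw [Real.tanh_eq_sinh_div_cosh, div_pow, div_lt_one (by positivity)]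
  nlinarith [Real.cosh_sq_sub_sinh_sq x]

lemma hasDerivAt_tanh (x : ℝ) : HasDerivAt Real.tanh (1 - Real.tanh x ^ 2) x := by
  have h := (Real.hasDerivAt_sinh x).div (Real.hasDerivAt_cosh x) (ne_of_gt (Real.cosh_pos x))
  have heq : Real.tanh = fun x => Real.sinh x / Real.cosh x := by
    funext y; exact Real.tanh_eq_sinh_div_cosh y
  rw [heq]
  refine h.congr_deriv ?_
  have hc := Real.cosh_pos x
  field_simp

lemma hT (x : ℝ) : HasDerivAt T ((1 - T x ^ 2) / Real.sqrt 2) x := by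
  have h := (hasDerivAt_tanh (x / Real.sqrt 2)).comp x ((hasDerivAt_id x).div_const (Real.sqrt 2))
  unfold T; simpa [div_eq_mul_inv, Function.comp_def] using h

lemma hE (x : ℝ) : 0 < 1 - T x ^ 2 := by
  have := tanh_sq_lt_one (x / Real.sqrt 2); simp only [T]; linarith

lemma sq2 : Real.sqrt 2 ^ 2 = 2 := Real.sq_sqrt (by norm_num)

lemma sqrt2_ne : Real.sqrt 2 ≠ 0 := by positivity

lemma hw (x : ℝ) : HasDerivAt w (-Real.sqrt 2 * T x) x := by
  have hin : HasDerivAt (fun y => 1 - T y ^ 2) (-(2 * T x ^ 1 * ((1 - T x ^ 2) / Real.sqrt 2))) x :=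
    ((hT x).pow 2).const_sub 1
  have h := hin.log (ne_of_gt (hE x))
  have hw' : w = fun y => Real.log (1 - T y ^ 2) := by funext y; rfl
  rw [hw']
  convert h using 1
  rw [eq_div_iff (ne_of_gt (hE x))]
  field_simp
  linear_combination (-(T x * (1 - T x ^ 2))) * Real.mul_self_sqrt (by norm_num : (0:ℝ) ≤ 2)

lemma exp_w (t : ℝ) : Real.exp (w t) = 1 - T t ^ 2 := Real.exp_log (hE t)

noncomputable def Wd (t : ℝ) : ℝ := -Real.sqrt 2 * T t

lemma hWd (t : ℝ) : HasDerivAt Wd (-(1 - T t ^ 2)) t := by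
  have h := (hT t).const_mul (-Real.sqrt 2)
  refine h.congr_deriv ?_
  field_simp

noncomputable def Wd2 (t : ℝ) : ℝ := -(1 - T t ^ 2)

lemma hWd2 (t : ℝ) : HasDerivAt Wd2 (Real.sqrt 2 * T t * (1 - T t ^ 2)) t := by
  have h := (((hT t).pow 2).const_sub 1).neg
  refine h.congr_deriv ?_
  field_simp
  linear_combination (-(T t * (1 - T t ^ 2))) * Real.mul_self_sqrt (by norm_num : (0:ℝ) ≤ 2)

lemma aux (α β : ℝ) (hα : 0 < α ∧ α < 1) (ε x : ℝ) (hε : ε = 1 ∨ ε = -1)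
    (s : Set ℝ) (hs : IsOpen s) (hx : x ∈ s)
    (habs : ∀ y ∈ s, |y| = ε * y) (hgt : ∀ y ∈ s, ¬ |y| < α) :
    deriv (deriv (psi α β)) x + Lam α β * step α x * Real.exp (U α β x) * psi α β x = 0 := by
  have hα1 : (1:ℝ) - α ≠ 0 := by linarith [hα.2]
  set c : ℝ := eta β / (1 - α) with hc
  set i : ℝ → ℝ := fun y => c * (ε * y - α) with hi_def
  have hi : ∀ y : ℝ, HasDerivAt i (c * ε) y := by
    intro y
    have := (((hasDerivAt_id y).const_mul ε).sub_const α).const_mul c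
    simpa using this
  have hUeq : Set.EqOn (U α β) (fun y => w (i y) + β) s := by
    intro y hy
    simp only [U, hi_def]
    rw [if_neg (hgt y hy), habs y hy, hc]
    congr 1
    ring
  have hu : ∀ y : ℝ, HasDerivAt (fun z => w (i z) + β) (Wd (i y) * (c * ε)) y := by
    intro y
    exact ((hw (i y)).comp y (hi y)).add_const β
  have hdU : ∀ y ∈ s, deriv (U α β) y = Wd (i y) * (c * ε) := by
    intro y hy
    rw [Filter.EventuallyEq.deriv_eq (Filter.eventuallyEq_of_mem (hs.mem_nhds hy) hUeq)]
    exact (hu y).deriv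
  set D1 : ℝ → ℝ := fun y => (y - α) * (Wd (i y) * (c * ε)) + 2 with hD1_def
  have hpsieq : Set.EqOn (psi α β) D1 s := by
    intro y hy
    simp only [psi, hD1_def]
    rw [hdU y hy]
  set P : ℝ → ℝ := fun y =>
    1 * (Wd (i y) * (c * ε)) + (y - α) * (Wd2 (i y) * (c * ε) * (c * ε)) with hP_def
  have hD1 : ∀ y : ℝ, HasDerivAt D1 (P y) y := by
    intro y
    exact (((hasDerivAt_id y).sub_const α).mul
      (((hWd (i y)).comp y (hi y)).mul_const (c * ε))).add_const 2
  have hdpsi : ∀ y ∈ s, deriv (psi α β) y = P y := by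
    intro y hy
    rw [Filter.EventuallyEq.deriv_eq (Filter.eventuallyEq_of_mem (hs.mem_nhds hy) hpsieq)]
    exact (hD1 y).deriv
  set Q : ℝ := 1 * (Wd2 (i x) * (c * ε) * (c * ε)) +
      (1 * (Wd2 (i x) * (c * ε) * (c * ε)) +
        (x - α) * ((Real.sqrt 2 * T (i x) * (1 - T (i x) ^ 2)) * (c * ε) * (c * ε) * (c * ε))) with hQ_def
  have hP : HasDerivAt P Q x := by
    have h1 := (((hWd (i x)).comp x (hi x)).mul_const (c * ε)).const_mul 1
    have h2 := ((hasDerivAt_id x).sub_const α).mul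
      ((((hWd2 (i x)).comp x (hi x)).mul_const (c * ε)).mul_const (c * ε))
    exact h1.add h2
  have hdd : deriv (deriv (psi α β)) x = Q := by
    rw [Filter.EventuallyEq.deriv_eq (Filter.eventuallyEq_of_mem (hs.mem_nhds hx) hdpsi)]
    exact hP.deriv
  have hstep : step α x = 1 := by simp only [step, if_neg (hgt x hx)]
  rw [hdd, hstep, hUeq hx, hpsieq hx]
  simp only [hQ_def, hD1_def, Wd, Wd2, Lam, Real.exp_add, exp_w, Real.exp_neg]
  have hz : ((1:ℝ) - α) ^ (-2 : ℤ) = ((1 - α) ^ (2:ℕ))⁻¹ := by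
    rw [zpow_neg]
    norm_cast
  rw [hz, hc]
  rcases hε with rfl | rfl <;>
  · field_simp
    ring


theorem stmt_17 (α β : ℝ) (hα : 0 < α ∧ α < 1) (hβ : 0 < β) :
    ∀ x ∈ Ioo (-1 : ℝ) 1 \ {-α, α},
      deriv (deriv (psi α β)) x
        + Lam α β * step α x * Real.exp (U α β x) * psi α β x = 0 := by
  rintro x ⟨hx1, hx2⟩
  simp only [mem_insert_iff, mem_singleton_iff] at hx2
  push_neg at hx2
  by_cases h1 : |x| < α
  · -- inner region: everything is locally constant
    set s : Set ℝ := {y : ℝ | |y| < α} with hs_def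
    have hs : IsOpen s := isOpen_lt continuous_abs continuous_const
    have hx : x ∈ s := h1
    have hUeq : Set.EqOn (U α β) (fun _ => β) s := by
      intro y hy
      have hy' : |y| < α := hy
      simp only [U, if_pos hy']
    have hpsieq : Set.EqOn (psi α β) (fun _ => (2:ℝ)) s := by
      intro y hy
      have : deriv (U α β) y = 0 := by
        rw [Filter.EventuallyEq.deriv_eq (Filter.eventuallyEq_of_mem (hs.mem_nhds hy) hUeq)]
        exact deriv_const y β
      simp only [psi, this]; ring
    have hdpsi : ∀ y ∈ s, deriv (psi α β) y = 0 := by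
      intro y hy
      rw [Filter.EventuallyEq.deriv_eq (Filter.eventuallyEq_of_mem (hs.mem_nhds hy) hpsieq)]
      exact deriv_const y 2
    have hdd : deriv (deriv (psi α β)) x = 0 := by
      rw [Filter.EventuallyEq.deriv_eq (Filter.eventuallyEq_of_mem (hs.mem_nhds hx) hdpsi)]
      exact deriv_const x 0
    have hstep : step α x = 0 := by simp only [step, if_pos h1]
    rw [hdd, hstep]; ring
  · have habsne : |x| ≠ α := by
      intro h
      rcases (abs_eq (le_of_lt hα.1)).mp h with h' | h'
      · exact hx2.2 h'
      · exact hx2.1 h'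
    have hgtabs : α < |x| := lt_of_le_of_ne (not_lt.mp h1) (Ne.symm habsne)
    rcases le_or_gt 0 x with hx0 | hx0
    · have hxα : α < x := by rwa [abs_of_nonneg hx0] at hgtabs
      exact aux α β hα 1 x (Or.inl rfl) (Ioi α) isOpen_Ioi hxα
        (fun y hy => by rw [abs_of_pos (lt_trans hα.1 hy)]; ring)
        (fun y hy => by
          rw [abs_of_pos (lt_trans hα.1 hy)]; exact not_lt.mpr (le_of_lt hy))
    · have hxα : x < -α := by
        rw [abs_of_neg hx0] at hgtabs; linarith
      have hneg : ∀ y ∈ Iio (-α), y < 0 := fun y hy => by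
        have : y < -α := hy
        linarith [hα.1]
      exact aux α β hα (-1) x (Or.inr rfl) (Iio (-α)) isOpen_Iio hxα
        (fun y hy => by rw [abs_of_neg (hneg y hy)]; ring)
        (fun y hy => by
          rw [abs_of_neg (hneg y hy)]
          have : y < -α := hy
          exact not_lt.mpr (by linarith))
end
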